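/- arXiv:math/0003152 — 4 statements merged into one kernel-verified Lean document; each statement's English description precedes it below -/
import Mathlib

section
/- Let A be a C*-algebra, ω a positive linear functional on A, and a an element of the closed unit ball of A. Then ‖a·ω − ω‖ ≤ (2‖ω‖)^{1/2} · |‖ω‖ − ω(a)|^{1/2}, where a·ω denotes the functional x ↦ ω(xa). -/
open scoped ComplexOrder

/-- Right translate of a functional: `(a · ω) x = ω (x * a)`. -/
noncomputable def rightMulFunctional {A : Type*} [NonUnitalCStarAlgebra A]
    (ω : A →L[ℂ] ℂ) (a : A) : A →L[ℂ] ℂ :=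
  ω.comp ((ContinuousLinearMap.mul ℂ A).flip a)



section CS
variable {B : Type*} [NonUnitalRing B] [StarRing B] [Module ℂ B]
  [SMulCommClass ℂ B B] [IsScalarTower ℂ B B] [StarModule ℂ B]

lemma herm_aux (f : B →ₗ[ℂ] ℂ) (hf : ∀ z : B, 0 ≤ f (star z * z)) (u v : B) :
    (starRingEnd ℂ) (f (star u * v)) = f (star v * u) := by
  have him : ∀ z : B, (f (star z * z)).im = 0 := fun z ↦ ((Complex.nonneg_iff.mp (hf z)).2).symm
  have h0 := him (u + v)
  have h1 := him (u + Complex.I • v)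
  have e0 : star (u + v) * (u + v)
      = star u * u + (star v * v + (star u * v + star v * u)) := by
    simp [star_add, add_mul, mul_add]; abel
  have e1 : star (u + Complex.I • v) * (u + Complex.I • v)
      = star u * u + (star v * v + (Complex.I • (star u * v) - Complex.I • (star v * u))) := by
    simp only [star_add, star_smul, Complex.star_def, Complex.conj_I, add_mul, mul_add,
      smul_mul_assoc, mul_smul_comm, neg_smul, neg_mul]
    match_scalars <;> simp [Complex.I_sq] <;> ring
  rw [e0] at h0; rw [e1] at h1
  simp only [map_add, map_smul, map_sub, Complex.add_im, Complex.sub_im, smul_eq_mul,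
    Complex.mul_im, Complex.I_re, Complex.I_im, zero_mul, one_mul,
    zero_add, him] at h0 h1
  have hre : (f (star u * v)).re = (f (star v * u)).re := by linarith
  have him2 : (f (star u * v)).im = -(f (star v * u)).im := by linarith
  apply Complex.ext <;> simp [hre, him2]

lemma cs_aux (f : B →ₗ[ℂ] ℂ) (hf : ∀ z : B, 0 ≤ f (star z * z)) (u v : B) :
    ‖f (star u * v)‖ ^ 2 ≤ (f (star u * u)).re * (f (star v * v)).re := by
  letI c : PreInnerProductSpace.Core ℂ B :=
    { inner := fun x y => f (star x * y)
      conj_inner_symm := fun x y => herm_aux f hf y x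
      re_inner_nonneg := fun x => (Complex.nonneg_iff.mp (hf x)).1
      add_left := fun x y z => by simp [star_add, add_mul]
      smul_left := fun x y r => by
        simp [star_smul, smul_mul_assoc, Complex.star_def, smul_eq_mul] }
  letI : Inner ℂ B := c.toInner
  have h := InnerProductSpace.Core.inner_mul_inner_self_le (𝕜 := ℂ) (F := B) u v
  have hsymm : ‖(inner ℂ v u : ℂ)‖ = ‖(inner ℂ u v : ℂ)‖ := by
    rw [← c.conj_inner_symm v u]; exact RCLike.norm_conj _
  rw [hsymm, ← sq] at h
  exact h

end CS

lemma approx_unit {A : Type*} [NonUnitalCStarAlgebra A] (y : A) {δ : ℝ} (hδ : 0 < δ) :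
    ∃ e : A, IsSelfAdjoint e ∧ ‖e‖ ≤ 1 ∧ ‖e * y - y‖ ^ 2 ≤ Real.sqrt δ / 2 := by
  set b : A := y * star y with hb_def
  have hb : IsSelfAdjoint b := .mul_star_self y
  set g : ℝ → ℝ := fun t => t ^ 2 / (t ^ 2 + δ) with hg_def
  have hgc : Continuous g := by
    apply Continuous.div (by fun_prop) (by fun_prop)
    intro t; positivity
  have hg0 : g 0 = 0 := by simp [hg_def]
  have hg_mem : ∀ t : ℝ, 0 ≤ g t ∧ g t ≤ 1 := by
    intro t
    constructor
    · positivity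
    · rw [hg_def]
      rw [div_le_one (by positivity)]; nlinarith
  set e : A := cfcₙ g b with he_def
  have he_sa : IsSelfAdjoint e := cfcₙ_predicate g b
  refine ⟨e, he_sa, ?_, ?_⟩
  · apply norm_cfcₙ_le
    intro t _
    rw [Real.norm_eq_abs, abs_le]
    exact ⟨by linarith [(hg_mem t).1], (hg_mem t).2⟩
  · have key : (e * y - y) * star (e * y - y) = e * b * e - e * b - b * e + b := by
      rw [star_sub, star_mul, he_sa.star_eq]
      simp only [hb_def]
      noncomm_ring
    set h : ℝ → ℝ := fun t => g t * t * g t - g t * t - t * g t + t with hh_def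
    have hcfc : e * b * e - e * b - b * e + b = cfcₙ h b := by
      have h1 : cfcₙ (fun t : ℝ => g t * t) b = e * b := by
        rw [cfcₙ_mul g (fun t => t) b (hgc.continuousOn) hg0 (by fun_prop) rfl, cfcₙ_id' ℝ b]
      have h2 : cfcₙ (fun t : ℝ => t * g t) b = b * e := by
        rw [cfcₙ_mul (fun t => t) g b (by fun_prop) rfl (hgc.continuousOn) hg0, cfcₙ_id' ℝ b]
      have h3 : cfcₙ (fun t : ℝ => g t * t * g t) b = e * b * e := by
        rw [cfcₙ_mul (fun t => g t * t) g b (by fun_prop) (by simp [hg0])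
          (hgc.continuousOn) hg0, h1]
      rw [hh_def]
      rw [cfcₙ_add (fun t => g t * t * g t - g t * t - t * g t) (fun t => t) b
        (by fun_prop) (by simp [hg0]) (by fun_prop) rfl]
      rw [cfcₙ_sub (fun t => g t * t * g t - g t * t) (fun t => t * g t) b
        (by fun_prop) (by simp [hg0]) (by fun_prop) (by simp [hg0])]
      rw [cfcₙ_sub (fun t => g t * t * g t) (fun t => g t * t) b
        (by fun_prop) (by simp [hg0]) (by fun_prop) (by simp [hg0])]
      rw [h1, h2, h3, cfcₙ_id' ℝ b]
    have hbound : ‖cfcₙ h b‖ ≤ Real.sqrt δ / 2 := by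
      apply norm_cfcₙ_le
      intro t _
      have hne : t ^ 2 + δ ≠ 0 := by positivity
      have hht : h t = t * δ ^ 2 / (t ^ 2 + δ) ^ 2 := by
        simp only [hh_def, hg_def]
        field_simp
        ring
      rw [Real.norm_eq_abs, hht, abs_div,
        abs_of_nonneg (by positivity : (0:ℝ) ≤ (t ^ 2 + δ) ^ 2)]
      rw [div_le_div_iff₀ (by positivity) (by norm_num)]
      have hs : Real.sqrt δ ^ 2 = δ := Real.sq_sqrt hδ.le
      have hs0 : 0 < Real.sqrt δ := Real.sqrt_pos.mpr hδ
      have habs : |t * δ ^ 2| = |t| * δ ^ 2 := by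
        rw [abs_mul, abs_of_nonneg (show (0:ℝ) ≤ δ ^ 2 by positivity)]
      rw [habs]
      have h1 : 2 * |t| * Real.sqrt δ ≤ t ^ 2 + δ := by
        nlinarith [sq_nonneg (|t| - Real.sqrt δ), sq_abs t]
      have key2 : 2 * |t| * Real.sqrt δ * δ ≤ (t ^ 2 + δ) ^ 2 := by
        nlinarith [mul_le_mul_of_nonneg_right h1 (by positivity : (0:ℝ) ≤ t ^ 2 + δ),
          mul_le_mul_of_nonneg_right (show δ ≤ t ^ 2 + δ by nlinarith [sq_nonneg t])
            (by positivity : (0:ℝ) ≤ 2 * |t| * Real.sqrt δ)]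
      nlinarith [mul_le_mul_of_nonneg_right key2 hs0.le]
    calc ‖e * y - y‖ ^ 2 = ‖(e * y - y) * star (e * y - y)‖ := by
          rw [sq, ← CStarRing.norm_self_mul_star]
      _ = ‖cfcₙ h b‖ := by rw [key, hcfc]
      _ ≤ Real.sqrt δ / 2 := hbound

lemma approx_unit' {A : Type*} [NonUnitalCStarAlgebra A] (y : A) {ε : ℝ} (hε : 0 < ε) :
    ∃ e : A, IsSelfAdjoint e ∧ ‖e‖ ≤ 1 ∧ ‖e * y - y‖ ≤ ε := by
  obtain ⟨e, h1, h2, h3⟩ := approx_unit y (show (0:ℝ) < ε ^ 4 by positivity)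
  refine ⟨e, h1, h2, ?_⟩
  have hs : Real.sqrt (ε ^ 4) = ε ^ 2 := by
    rw [show ε ^ 4 = (ε ^ 2) ^ 2 by ring, Real.sqrt_sq (by positivity)]
  rw [hs] at h3
  nlinarith [norm_nonneg (e * y - y)]
section Omega
variable {A : Type*} [NonUnitalCStarAlgebra A] (ω : A →L[ℂ] ℂ)
  (hω : ∀ x : A, 0 ≤ ω (star x * x))

include hω

lemma omega_sq_le (y : A) : ‖ω y‖ ^ 2 ≤ ‖ω‖ * (ω (star y * y)).re := by
  have hR : 0 ≤ (ω (star y * y)).re := (Complex.nonneg_iff.mp (hω y)).1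
  set R := (ω (star y * y)).re with hR_def
  have main : ‖ω y‖ ≤ Real.sqrt (‖ω‖ * R) := by
    refine le_of_forall_pos_le_add fun ε hε => ?_
    obtain ⟨e, he_sa, he_norm, he_close⟩ :=
      approx_unit' y (show 0 < ε / (‖ω‖ + 1) by positivity)
    have h1 : ‖ω (e * y)‖ ^ 2 ≤ ‖ω‖ * R := by
      have hcs := cs_aux ω.toLinearMap hω e y
      simp only [ContinuousLinearMap.coe_coe] at hcs
      rw [he_sa.star_eq] at hcs
      refine hcs.trans ?_
      have h2 : (ω (e * e)).re ≤ ‖ω‖ := by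
        refine (Complex.re_le_norm _).trans ?_
        calc ‖ω (e * e)‖ ≤ ‖ω‖ * ‖e * e‖ := ω.le_opNorm _
          _ ≤ ‖ω‖ * 1 := by
              gcongr
              calc ‖e * e‖ ≤ ‖e‖ * ‖e‖ := norm_mul_le e e
                _ ≤ 1 := by nlinarith [norm_nonneg e]
          _ = ‖ω‖ := mul_one _
      gcongr
    have h1' : ‖ω (e * y)‖ ≤ Real.sqrt (‖ω‖ * R) := by
      rw [show ‖ω (e * y)‖ = Real.sqrt (‖ω (e * y)‖ ^ 2) by
        rw [Real.sqrt_sq (norm_nonneg _)]]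
      exact Real.sqrt_le_sqrt h1
    calc ‖ω y‖ = ‖ω (e * y) - (ω (e * y) - ω y)‖ := by rw [sub_sub_cancel]
      _ ≤ ‖ω (e * y)‖ + ‖ω (e * y) - ω y‖ := norm_sub_le _ _
      _ ≤ Real.sqrt (‖ω‖ * R) + ε := by
          gcongr
          rw [← map_sub]
          calc ‖ω (e * y - y)‖ ≤ ‖ω‖ * ‖e * y - y‖ := ω.le_opNorm _
            _ ≤ ‖ω‖ * (ε / (‖ω‖ + 1)) := by gcongr
            _ ≤ ε := by
                rw [mul_div_assoc']
                rw [div_le_iff₀ (by positivity)]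
                nlinarith [norm_nonneg ω]
  calc ‖ω y‖ ^ 2 ≤ Real.sqrt (‖ω‖ * R) ^ 2 := by gcongr
    _ = ‖ω‖ * R := Real.sq_sqrt (by positivity)

lemma omega_star_apply (y : A) : ω (star y) = (starRingEnd ℂ) (ω y) := by
  rw [← sub_eq_zero, ← norm_le_zero_iff]
  refine le_of_forall_pos_le_add fun ε hε => ?_
  rw [zero_add]
  obtain ⟨e, he_sa, he_norm, he_close⟩ :=
    approx_unit' y (show 0 < ε / (2 * ‖ω‖ + 1) by positivity)
  have key : ω (star y * e) = (starRingEnd ℂ) (ω (e * y)) := by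
    have := herm_aux ω.toLinearMap hω e y
    simp only [ContinuousLinearMap.coe_coe, he_sa.star_eq] at this
    rw [← this]
  have h1 : ‖ω (star y) - ω (star y * e)‖ ≤ ‖ω‖ * (ε / (2 * ‖ω‖ + 1)) := by
    rw [← map_sub]
    calc ‖ω (star y - star y * e)‖ ≤ ‖ω‖ * ‖star y - star y * e‖ := ω.le_opNorm _
      _ ≤ ‖ω‖ * (ε / (2 * ‖ω‖ + 1)) := by
          gcongr
          · rw [show star y - star y * e = star (y - (e * y)) by
              rw [star_sub, star_mul, he_sa.star_eq]]
            rw [norm_star, ← neg_sub, norm_neg]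
            exact he_close
  have h2 : ‖(starRingEnd ℂ) (ω (e * y)) - (starRingEnd ℂ) (ω y)‖
      ≤ ‖ω‖ * (ε / (2 * ‖ω‖ + 1)) := by
    rw [← map_sub, RCLike.norm_conj, ← map_sub]
    calc ‖ω (e * y - y)‖ ≤ ‖ω‖ * ‖e * y - y‖ := ω.le_opNorm _
      _ ≤ ‖ω‖ * (ε / (2 * ‖ω‖ + 1)) := by gcongr
  calc ‖ω (star y) - (starRingEnd ℂ) (ω y)‖
      ≤ ‖ω (star y) - ω (star y * e)‖ + ‖ω (star y * e) - (starRingEnd ℂ) (ω y)‖ :=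
        norm_sub_le_norm_sub_add_norm_sub _ _ _
    _ ≤ ‖ω‖ * (ε / (2 * ‖ω‖ + 1)) + ‖ω‖ * (ε / (2 * ‖ω‖ + 1)) := by
        refine add_le_add h1 ?_
        rw [key]
        exact h2
    _ ≤ ε := by
        rw [← two_mul, ← mul_assoc, mul_div_assoc']
        rw [div_le_iff₀ (by positivity)]
        nlinarith [norm_nonneg ω]

end Omega

section Ext
variable {A : Type*} [NonUnitalCStarAlgebra A] (ω : A →L[ℂ] ℂ)

noncomputable def extFun : Unitization ℂ A →ₗ[ℂ] ℂ :=
  ((‖ω‖ : ℂ)) • (Unitization.fstHom ℂ A).toLinearMap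
    + ω.toLinearMap.comp (Unitization.sndHom ℂ ℂ A)

lemma extFun_apply (z : Unitization ℂ A) :
    extFun ω z = (‖ω‖ : ℂ) * z.fst + ω z.snd := by
  simp [extFun]

variable (hω : ∀ x : A, 0 ≤ ω (star x * x))
include hω

lemma extFun_pos (z : Unitization ℂ A) : 0 ≤ extFun ω (star z * z) := by
  rw [extFun_apply]
  set K := ‖ω‖
  set l := z.fst with hl
  set y := z.snd with hy
  have hfst : (star z * z).fst = (starRingEnd ℂ) l * l := by
    simp [Unitization.fst_mul, Unitization.fst_star, Complex.star_def]
    rfl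
  have hsnd : (star z * z).snd
      = (starRingEnd ℂ) l • y + l • star y + star y * y := by
    simp [Unitization.snd_mul, Unitization.fst_star, Unitization.snd_star,
      Complex.star_def]
    rfl
  rw [hfst, hsnd]
  rw [map_add, map_add, map_smul, map_smul, omega_star_apply ω hω]
  have hR := hω y
  rw [Complex.nonneg_iff] at hR
  obtain ⟨hRre, hRim⟩ := hR
  have hw2 : (ω y).re ^ 2 + (ω y).im ^ 2 ≤ K * (ω (star y * y)).re := by
    have := omega_sq_le ω hω y
    rwa [show ‖ω y‖ ^ 2 = (ω y).re ^ 2 + (ω y).im ^ 2 by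
      rw [Complex.sq_norm, Complex.normSq_apply]; ring] at this
  have hK : 0 ≤ K := norm_nonneg ω
  rw [Complex.nonneg_iff]
  constructor
  · simp only [Complex.add_re, Complex.mul_re, Complex.ofReal_re, Complex.ofReal_im,
      Complex.conj_re, Complex.conj_im, smul_eq_mul, zero_mul, sub_zero]
    set a := l.re; set b := l.im; set wr := (ω y).re; set wi := (ω y).im
    have h1 : (a * wr + b * wi) ^ 2 ≤ (a ^ 2 + b ^ 2) * (K * (ω (star y * y)).re) := by
      nlinarith [sq_nonneg (a * wi - b * wr)]
    have hS : 0 ≤ K * (a ^ 2 + b ^ 2) + (ω (star y * y)).re := by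
      nlinarith [mul_nonneg hK (show (0:ℝ) ≤ a ^ 2 + b ^ 2 by positivity)]
    have habs : 4 * (a * wr + b * wi) ^ 2
        ≤ (K * (a ^ 2 + b ^ 2) + (ω (star y * y)).re) ^ 2 := by
      nlinarith [h1, sq_nonneg (K * (a ^ 2 + b ^ 2) - (ω (star y * y)).re)]
    nlinarith [habs, hS]
  · simp only [Complex.add_im, Complex.mul_im, Complex.ofReal_re, Complex.ofReal_im,
      Complex.conj_re, Complex.conj_im, smul_eq_mul, zero_mul, add_zero, zero_add]
    rw [← hRim]
    ring

end Ext

theorem norm_rightMulFunctional_sub_le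
    {A : Type*} [NonUnitalCStarAlgebra A]
    (ω : A →L[ℂ] ℂ) (hω : ∀ x : A, 0 ≤ ω (star x * x))
    (a : A) (ha : ‖a‖ ≤ 1) :
    ‖rightMulFunctional ω a - ω‖ ≤
      Real.sqrt (2 * ‖ω‖) * Real.sqrt ‖(‖ω‖ : ℂ) - ω a‖ := by
  set K := ‖ω‖ with hK_def
  have hK : 0 ≤ K := norm_nonneg ω
  set M := ‖(K : ℂ) - ω a‖ with hM_def
  have hM : 0 ≤ M := norm_nonneg _
  refine ContinuousLinearMap.opNorm_le_bound _ (by positivity) fun x => ?_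
  have happ : (rightMulFunctional ω a - ω) x = ω (x * a) - ω x := by
    simp [rightMulFunctional]
  rw [happ]
  set f := extFun ω with hf_def
  have hfpos := extFun_pos ω hω
  have hcs := cs_aux f hfpos (star ((x : Unitization ℂ A))) (((a : Unitization ℂ A)) - 1)
  rw [star_star] at hcs
  -- identify the three values
  have e1 : f ((x : Unitization ℂ A) * (((a : Unitization ℂ A)) - 1)) = ω (x * a) - ω x := by
    rw [extFun_apply]
    simp [Unitization.fst_mul, Unitization.snd_mul, Unitization.fst_inr, Unitization.snd_inr,
      Unitization.fst_one, Unitization.snd_one, sub_eq_add_neg, Unitization.fst_add,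
      Unitization.snd_add, Unitization.fst_neg, Unitization.snd_neg,
      mul_sub, sub_smul, map_sub, map_add, map_neg]
    ring
  have e2 : (f ((x : Unitization ℂ A) * star ((x : Unitization ℂ A)))).re ≤ K * ‖x‖ ^ 2 := by
    rw [← Unitization.inr_star, ← Unitization.inr_mul, extFun_apply]
    simp only [Unitization.fst_inr, Unitization.snd_inr, mul_zero, zero_add]
    refine (Complex.re_le_norm _).trans ?_
    calc ‖ω (x * star x)‖ ≤ K * ‖x * star x‖ := ω.le_opNorm _
      _ = K * ‖x‖ ^ 2 := by rw [CStarRing.norm_self_mul_star, sq]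
  have e3 : (f (star (((a : Unitization ℂ A)) - 1) * (((a : Unitization ℂ A)) - 1))).re
      ≤ 2 * M := by
    have expand : star (((a : Unitization ℂ A)) - 1) * (((a : Unitization ℂ A)) - 1)
        = ((star a * a : A) : Unitization ℂ A) - ((star a : A) : Unitization ℂ A)
          - ((a : A) : Unitization ℂ A) + 1 := by
      rw [star_sub, star_one, Unitization.inr_mul, Unitization.inr_star]
      noncomm_ring
    rw [expand, map_add, map_sub, map_sub]
    have hf1 : f (1 : Unitization ℂ A) = (K : ℂ) := by
      rw [extFun_apply]; simp [hK_def]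
    have hfr : ∀ y : A, f ((y : Unitization ℂ A)) = ω y := by
      intro y; rw [extFun_apply]; simp
    rw [hf1, hfr, hfr, hfr, omega_star_apply ω hω]
    have haa : (ω (star a * a)).re ≤ K := by
      refine (Complex.re_le_norm _).trans ?_
      calc ‖ω (star a * a)‖ ≤ K * ‖star a * a‖ := ω.le_opNorm _
        _ ≤ K * 1 := by
            gcongr
            calc ‖star a * a‖ ≤ ‖star a‖ * ‖a‖ := norm_mul_le _ _
              _ ≤ 1 := by rw [norm_star]; nlinarith [norm_nonneg a]
        _ = K := mul_one K
    have hre2 : K - (ω a).re ≤ M := by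
      rw [hM_def]
      calc K - (ω a).re = (((K : ℂ)) - ω a).re := by simp
        _ ≤ ‖(K : ℂ) - ω a‖ := Complex.re_le_norm _
    simp only [Complex.add_re, Complex.sub_re, Complex.ofReal_re, Complex.conj_re]
    linarith
  have hprod : ‖ω (x * a) - ω x‖ ^ 2 ≤ (K * ‖x‖ ^ 2) * (2 * M) := by
    rw [e1] at hcs
    refine hcs.trans ?_
    have h2 : 0 ≤ (f (star (((a : Unitization ℂ A)) - 1) * (((a : Unitization ℂ A)) - 1))).re :=
      (Complex.nonneg_iff.mp (hfpos _)).1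
    have h1 : 0 ≤ (f ((x : Unitization ℂ A) * star ((x : Unitization ℂ A)))).re := by
      have := (Complex.nonneg_iff.mp (hfpos (star ((x : Unitization ℂ A))))).1
      rwa [star_star] at this
    exact mul_le_mul e2 e3 h2 (by positivity)
  have : ‖ω (x * a) - ω x‖ ≤ Real.sqrt ((2 * K * M) * ‖x‖ ^ 2) := by
    rw [← Real.sqrt_sq (norm_nonneg (ω (x * a) - ω x))]
    refine Real.sqrt_le_sqrt ?_
    nlinarith [hprod]
  refine this.trans ?_
  rw [Real.sqrt_mul (by positivity), Real.sqrt_sq (norm_nonneg x),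
    Real.sqrt_mul (by positivity)]
end

section
/- Let φ, ψ be elements of the predual of a von Neumann algebra N. If φ and ψ are orthogonal (i.e., they have orthogonal right support projections and orthogonal left support projections), then ‖αφ + βψ‖ = |α|‖φ‖ + |β|‖ψ‖ for all scalars α, β; that is, the linear span of φ and ψ is isometric to two-dimensional ℓ¹. -/
/-- Two functionals `φ, ψ` on a von Neumann algebra `N` (modelled as a unital
C*-algebra) are orthogonal: there are projections `s, t` supporting `φ`
(that is, `φ = t·φ·s`, i.e. `φ x = φ (s * x * t)`) and projections `s', t'`
supporting `ψ`, with `s ⊥ s'` and `t ⊥ t'`. -/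
def OrthogonalFunctionals {N : Type*} [CStarAlgebra N] (φ ψ : N →L[ℂ] ℂ) : Prop :=
  ∃ s t s' t' : N,
    (IsSelfAdjoint s ∧ s * s = s) ∧ (IsSelfAdjoint t ∧ t * t = t) ∧
    (IsSelfAdjoint s' ∧ s' * s' = s') ∧ (IsSelfAdjoint t' ∧ t' * t' = t') ∧
    s * s' = 0 ∧ t * t' = 0 ∧
    (∀ x, φ x = φ (s * x * t)) ∧ (∀ x, ψ x = ψ (s' * x * t'))

/-- A real number bounded by `2 * m ^ (2 ^ n)` at every `2 ^ n`-th power is `≤ m`. -/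
lemma le_of_forall_two_pow_le {r m : ℝ} (hr : 0 ≤ r) (hm : 0 ≤ m)
    (h : ∀ n : ℕ, r ^ (2 ^ n) ≤ 2 * m ^ (2 ^ n)) : r ≤ m := by
  by_contra hc
  push_neg at hc
  rcases eq_or_lt_of_le hm with hm0 | hm0
  · have h0 := h 0
    simp only [pow_zero, pow_one, ← hm0] at h0
    nlinarith
  · have h1 : 1 < r / m := (one_lt_div hm0).mpr hc
    obtain ⟨n, hn⟩ := pow_unbounded_of_one_lt (2 : ℝ) h1
    have hn2 : (r / m) ^ n ≤ (r / m) ^ (2 ^ n) :=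
      pow_le_pow_right₀ h1.le (Nat.lt_two_pow_self (n := n)).le
    have h2 : 2 < (r / m) ^ (2 ^ n) := lt_of_lt_of_le hn hn2
    rw [div_pow, lt_div_iff₀ (by positivity)] at h2
    exact absurd (h n) (by linarith)

/-- In a C*-algebra, if `a` and `b` have orthogonal "supports" on both sides
(`a⋆ b = 0` and `a b⋆ = 0`), then `‖a + b‖ ≤ max ‖a‖ ‖b‖`. -/
lemma norm_add_le_max_of_orthogonal {N : Type*} [CStarAlgebra N] {a b : N}
    (hab : star a * b = 0) (hab' : a * star b = 0) :
    ‖a + b‖ ≤ max ‖a‖ ‖b‖ := by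
  have hba : star b * a = 0 := by
    have := congrArg star hab
    simpa [star_mul] using this
  have hba' : b * star a = 0 := by
    have := congrArg star hab'
    simpa [star_mul] using this
  set p := star a * a with hp_def
  set q := star b * b with hq_def
  have hp : IsSelfAdjoint p := IsSelfAdjoint.star_mul_self a
  have hq : IsSelfAdjoint q := IsSelfAdjoint.star_mul_self b
  have hpq : p * q = 0 := by
    rw [hp_def, hq_def]
    calc star a * a * (star b * b) = star a * (a * star b) * b := by
          simp only [mul_assoc]
    _ = 0 := by rw [hab', mul_zero, zero_mul]
  have hqp : q * p = 0 := by
    rw [hp_def, hq_def]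
    calc star b * b * (star a * a) = star b * (b * star a) * a := by
          simp only [mul_assoc]
    _ = 0 := by rw [hba', mul_zero, zero_mul]
  -- (p+q)^(n+1) = p^(n+1) + q^(n+1)
  have key : ∀ n : ℕ, (p + q) ^ (n + 1) = p ^ (n + 1) + q ^ (n + 1) := by
    intro n
    induction n with
    | zero => simp
    | succ k ih =>
      rw [pow_succ, ih, add_mul, mul_add, mul_add]
      have e1 : p ^ (k + 1) * q = 0 := by
        rw [pow_succ, mul_assoc, hpq, mul_zero]
      have e2 : q ^ (k + 1) * p = 0 := by
        rw [pow_succ, mul_assoc, hqp, mul_zero]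
      rw [e1, e2, ← pow_succ, ← pow_succ]
      abel
  -- sum of squares identity
  have hsum : star (a + b) * (a + b) = p + q := by
    rw [star_add, add_mul, mul_add, mul_add, hab, hba, hp_def, hq_def]
    abel
  -- norm of p + q
  have hpqsa : IsSelfAdjoint (p + q) := hp.add hq
  have hnorm_pq : ‖p + q‖ ≤ max ‖p‖ ‖q‖ := by
    apply le_of_forall_two_pow_le (norm_nonneg _) (le_max_of_le_left (norm_nonneg _))
    intro n
    have h2n : 2 ^ n = (2 ^ n - 1) + 1 := (Nat.succ_pred_eq_of_pos (by positivity)).symm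
    have hppow : ‖(p + q) ^ 2 ^ n‖ = ‖p + q‖ ^ 2 ^ n := by
      have h := congrArg (fun x : NNReal => (x : ℝ)) (hpqsa.nnnorm_pow_two_pow n)
      simpa [coe_nnnorm, NNReal.coe_pow] using h
    rw [← hppow, h2n, key]
    calc ‖p ^ (2 ^ n - 1 + 1) + q ^ (2 ^ n - 1 + 1)‖
        ≤ ‖p ^ (2 ^ n - 1 + 1)‖ + ‖q ^ (2 ^ n - 1 + 1)‖ := norm_add_le _ _
      _ ≤ ‖p‖ ^ (2 ^ n - 1 + 1) + ‖q‖ ^ (2 ^ n - 1 + 1) := by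
          gcongr <;> exact norm_pow_le' _ (Nat.succ_pos _)
      _ ≤ (max ‖p‖ ‖q‖) ^ (2 ^ n - 1 + 1) + (max ‖p‖ ‖q‖) ^ (2 ^ n - 1 + 1) :=
          add_le_add (pow_le_pow_left₀ (norm_nonneg _) (le_max_left _ _) _)
            (pow_le_pow_left₀ (norm_nonneg _) (le_max_right _ _) _)
      _ = 2 * (max ‖p‖ ‖q‖) ^ (2 ^ n - 1 + 1) := by ring
  -- conclude
  have hsq : ‖a + b‖ ^ 2 = ‖p + q‖ := by
    rw [← hsum, CStarRing.norm_star_mul_self]; ring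
  have hp_norm : ‖p‖ = ‖a‖ ^ 2 := by
    rw [hp_def, CStarRing.norm_star_mul_self]; ring
  have hq_norm : ‖q‖ = ‖b‖ ^ 2 := by
    rw [hq_def, CStarRing.norm_star_mul_self]; ring
  have hfinal : ‖a + b‖ ^ 2 ≤ (max ‖a‖ ‖b‖) ^ 2 := by
    rw [hsq]
    refine hnorm_pq.trans ?_
    rw [hp_norm, hq_norm]
    refine le_of_eq ?_
    calc max (‖a‖ ^ 2) (‖b‖ ^ 2)
      _ = (max ‖a‖ ‖b‖) ^ 2 := by
          rcases le_total ‖a‖ ‖b‖ with hle | hle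
          · rw [max_eq_right hle, max_eq_right (by nlinarith [norm_nonneg a, norm_nonneg b])]
          · rw [max_eq_left hle, max_eq_left (by nlinarith [norm_nonneg a, norm_nonneg b])]
  exact le_of_pow_le_pow_left₀ two_ne_zero (le_max_of_le_left (norm_nonneg _)) hfinal

/-- An epsilon-of-room argument for the lower bound. -/
lemma l1_eps_room {A B F P R : ℝ} (hA0 : 0 ≤ A) (hB0 : 0 ≤ B)
    (hk : ∀ ε : ℝ, 0 < ε → A * (F - ε) + B * (P - ε) ≤ R) : A * F + B * P ≤ R := by
  by_contra hc
  push_neg at hc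
  have hδ : 0 < A * F + B * P - R := by linarith
  have hε : 0 < (A * F + B * P - R) / (A + B + 1) := div_pos hδ (by linarith)
  have h2 := hk _ hε
  have h3 : (A + B) * ((A * F + B * P - R) / (A + B + 1)) < A * F + B * P - R := by
    rw [div_eq_inv_mul, ← mul_assoc]
    have h4 : (A + B) * (A + B + 1)⁻¹ < 1 := by
      rw [mul_inv_lt_iff₀ (by linarith), one_mul]
      linarith
    nlinarith
  nlinarith

/-- A projection has norm at most 1. -/
lemma norm_proj_le_one {N : Type*} [CStarAlgebra N] {s : N}
    (hs : IsSelfAdjoint s) (hs2 : s * s = s) : ‖s‖ ≤ 1 := by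
  have h : ‖s‖ * ‖s‖ = ‖s‖ := by
    conv_rhs => rw [← hs2]
    conv_lhs => rw [← CStarRing.norm_star_mul_self (x := s), hs.star_eq]
  nlinarith [norm_nonneg s]

/-- If `φ ⊥ ψ` in the predual of a von Neumann algebra then the span of `φ, ψ`
is isometric to two-dimensional `ℓ¹`: `‖α φ + β ψ‖ = |α| ‖φ‖ + |β| ‖ψ‖`. -/
theorem orthogonal_functionals_span_l1
    {N : Type*} [CStarAlgebra N] (φ ψ : N →L[ℂ] ℂ)
    (h : OrthogonalFunctionals φ ψ) (α β : ℂ) :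
    ‖α • φ + β • ψ‖ = ‖α‖ * ‖φ‖ + ‖β‖ * ‖ψ‖ := by
  obtain ⟨s, t, s', t', ⟨hs, hs2⟩, ⟨ht, ht2⟩, ⟨hs', hs'2⟩, ⟨ht', ht'2⟩, hss', htt', hφ, hψ⟩ := h
  -- orthogonality in the other order
  have hs's : s' * s = 0 := by
    have := congrArg star hss'
    simpa [star_mul, hs.star_eq, hs'.star_eq] using this
  have ht't : t' * t = 0 := by
    have := congrArg star htt'
    simpa [star_mul, ht.star_eq, ht'.star_eq] using this
  refine le_antisymm ?_ ?_
  · -- triangle inequality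
    calc ‖α • φ + β • ψ‖ ≤ ‖α • φ‖ + ‖β • ψ‖ := norm_add_le _ _
      _ = ‖α‖ * ‖φ‖ + ‖β‖ * ‖ψ‖ := by
          have e1 := norm_smul α φ
          have e2 := norm_smul β ψ
          rw [e1, e2]
  · -- lower bound
    obtain ⟨A, hA⟩ : ∃ A : ℝ, A = ‖α‖ := ⟨_, rfl⟩
    obtain ⟨B, hB⟩ : ∃ B : ℝ, B = ‖β‖ := ⟨_, rfl⟩
    rw [← hA, ← hB]
    have hA0 : 0 ≤ A := hA ▸ norm_nonneg α
    have hB0 : 0 ≤ B := hB ▸ norm_nonneg β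
    have key : ∀ ε : ℝ, 0 < ε →
        A * (‖φ‖ - ε) + B * (‖ψ‖ - ε) ≤ ‖α • φ + β • ψ‖ := by
      intro ε hε
      obtain ⟨x, hx1, hx2⟩ := φ.exists_lt_apply_of_lt_opNorm (r := ‖φ‖ - ε) (by linarith)
      obtain ⟨y, hy1, hy2⟩ := ψ.exists_lt_apply_of_lt_opNorm (r := ‖ψ‖ - ε) (by linarith)
      -- phases
      set u : ℂ := if α * φ x = 0 then 1 else (starRingEnd ℂ) (α * φ x) / ‖α * φ x‖
        with hu_def
      set v : ℂ := if β * ψ y = 0 then 1 else (starRingEnd ℂ) (β * ψ y) / ‖β * ψ y‖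
        with hv_def
      have hu_norm : ‖u‖ ≤ 1 := by
        rw [hu_def]
        split_ifs with h0
        · simp
        · rw [norm_div, Complex.norm_conj, Complex.norm_real, Real.norm_eq_abs,
            abs_of_nonneg (norm_nonneg _),
            div_self (norm_ne_zero_iff.mpr h0)]
      have hv_norm : ‖v‖ ≤ 1 := by
        rw [hv_def]
        split_ifs with h0
        · simp
        · rw [norm_div, Complex.norm_conj, Complex.norm_real, Real.norm_eq_abs,
            abs_of_nonneg (norm_nonneg _),
            div_self (norm_ne_zero_iff.mpr h0)]
      have hu_eq : u * (α * φ x) = (‖α * φ x‖ : ℂ) := by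
        rw [hu_def]
        split_ifs with h0
        · simp [h0]
        · rw [div_mul_eq_mul_div, mul_comm, Complex.mul_conj, Complex.normSq_eq_norm_sq]
          push_cast
          rw [sq, mul_div_assoc,
            div_self (Complex.ofReal_ne_zero.mpr (norm_ne_zero_iff.mpr h0)), mul_one]
      have hv_eq : v * (β * ψ y) = (‖β * ψ y‖ : ℂ) := by
        rw [hv_def]
        split_ifs with h0
        · simp [h0]
        · rw [div_mul_eq_mul_div, mul_comm, Complex.mul_conj, Complex.normSq_eq_norm_sq]
          push_cast
          rw [sq, mul_div_assoc,
            div_self (Complex.ofReal_ne_zero.mpr (norm_ne_zero_iff.mpr h0)), mul_one]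
      -- the test element
      set a : N := u • (s * x * t) with ha_def
      set b : N := v • (s' * y * t') with hb_def
      set z : N := a + b with hz_def
      -- φ z = u * φ x, ψ z = v * ψ y
      have hφz : φ z = u * φ x := by
        have h1 : φ a = u * φ x := by
          rw [ha_def, map_smul, smul_eq_mul, ← hφ x]
        have h2 : φ b = 0 := by
          rw [hφ b, hb_def]
          have : s * (v • (s' * y * t')) * t = v • (s * s' * y * (t' * t)) := by
            rw [mul_smul_comm, smul_mul_assoc]
            congr 1
            simp only [mul_assoc]
          rw [this, hss', ht't]
          simp
        rw [hz_def, map_add, h1, h2, add_zero]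
      have hψz : ψ z = v * ψ y := by
        have h1 : ψ b = v * ψ y := by
          rw [hb_def, map_smul, smul_eq_mul, ← hψ y]
        have h2 : ψ a = 0 := by
          rw [hψ a, ha_def]
          have : s' * (u • (s * x * t)) * t' = u • (s' * s * x * (t * t')) := by
            rw [mul_smul_comm, smul_mul_assoc]
            congr 1
            simp only [mul_assoc]
          rw [this, hs's, htt']
          simp
        rw [hz_def, map_add, h2, h1, zero_add]
      -- ‖z‖ ≤ 1
      have hz_norm : ‖z‖ ≤ 1 := by
        have horth1 : star a * b = 0 := by
          rw [ha_def, hb_def, star_smul, smul_mul_assoc, mul_smul_comm]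
          have : star (s * x * t) * (s' * y * t') = 0 := by
            simp only [star_mul, ht.star_eq, hs.star_eq, mul_assoc]
            rw [← mul_assoc s s', hss', zero_mul, mul_zero, mul_zero]
          rw [this, smul_zero, smul_zero]
        have horth2 : a * star b = 0 := by
          rw [ha_def, hb_def, star_smul, smul_mul_assoc, mul_smul_comm]
          have : (s * x * t) * star (s' * y * t') = 0 := by
            simp only [star_mul, ht'.star_eq, hs'.star_eq, mul_assoc]
            rw [← mul_assoc t t', htt', zero_mul, mul_zero, mul_zero]
          rw [this, smul_zero, smul_zero]
        have ha_norm : ‖a‖ ≤ 1 := by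
          rw [ha_def, norm_smul]
          have h1 : ‖s * x * t‖ ≤ 1 := by
            have e1 := norm_mul_le (s * x) t
            have e2 := norm_mul_le s x
            nlinarith [norm_nonneg s, norm_nonneg x, norm_nonneg t, norm_nonneg (s * x),
              norm_proj_le_one hs hs2, norm_proj_le_one ht ht2, hx1.le]
          have h2 : ‖u‖ ≤ 1 := by exact hu_norm
          nlinarith [norm_nonneg u, norm_nonneg (s * x * t)]
        have hb_norm : ‖b‖ ≤ 1 := by
          rw [hb_def, norm_smul]
          have h1 : ‖s' * y * t'‖ ≤ 1 := by
            have e1 := norm_mul_le (s' * y) t'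
            have e2 := norm_mul_le s' y
            nlinarith [norm_nonneg s', norm_nonneg y, norm_nonneg t', norm_nonneg (s' * y),
              norm_proj_le_one hs' hs'2, norm_proj_le_one ht' ht'2, hy1.le]
          have h2 : ‖v‖ ≤ 1 := by exact hv_norm
          nlinarith [norm_nonneg v, norm_nonneg (s' * y * t')]
        calc ‖z‖ ≤ max ‖a‖ ‖b‖ := norm_add_le_max_of_orthogonal horth1 horth2
          _ ≤ 1 := max_le ha_norm hb_norm
      -- evaluate
      have heval : (α • φ + β • ψ) z = (‖α * φ x‖ + ‖β * ψ y‖ : ℝ) := by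
        simp only [ContinuousLinearMap.add_apply, ContinuousLinearMap.smul_apply, smul_eq_mul]
        rw [hφz, hψz]
        push_cast
        rw [← hu_eq, ← hv_eq]
        ring
      have hle : ‖(α • φ + β • ψ) z‖ ≤ ‖α • φ + β • ψ‖ :=
        (α • φ + β • ψ).unit_le_opNorm z hz_norm
      rw [heval] at hle
      have habs : ‖((‖α * φ x‖ + ‖β * ψ y‖ : ℝ) : ℂ)‖
          = ‖α * φ x‖ + ‖β * ψ y‖ := by
        rw [Complex.norm_real, Real.norm_eq_abs, abs_of_nonneg (by positivity)]
      rw [habs, norm_mul, norm_mul, ← hA, ← hB] at hle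
      have h1 : A * (‖φ‖ - ε) ≤ A * ‖φ x‖ := by
        apply mul_le_mul_of_nonneg_left _ hA0
        exact hx2.le
      have h2 : B * (‖ψ‖ - ε) ≤ B * ‖ψ y‖ := by
        apply mul_le_mul_of_nonneg_left _ hB0
        exact hy2.le
      calc A * (‖φ‖ - ε) + B * (‖ψ‖ - ε)
          ≤ A * ‖φ x‖ + B * ‖ψ y‖ := add_le_add h1 h2
        _ ≤ ‖α • φ + β • ψ‖ := hle
    -- pass to the limit ε → 0
    exact l1_eps_room hA0 hB0 key
end

section
/- Let A be a unital C*-algebra and let φ_1,…,φ_{n+1} be positive functionals in the unit ball of A' with ‖Σ_{k=1}^{n+1} α_k φ_k‖ ≥ (1−δ)Σ_{k=1}^{n+1}|α_k| for all scalars. Set σ = (1/n)Σ_{k=1}^n φ_k and τ = φ_{n+1}. Then there exists a selfadjoint x in the unit ball of A with positive part x⁺ and negative part x⁻ such that φ_k(x⁺) > 1 − 4nδ for k = 1,…,n and φ_{n+1}(x⁻) > 1 − 4δ. -/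
open scoped ComplexOrder
open ComplexStarModule

section Aux

variable {A : Type*} [CStarAlgebra A] [PartialOrder A] [StarOrderedRing A]

lemma aux_nonneg (φ : A →L[ℂ] ℂ) (hpos : ∀ a : A, 0 ≤ φ (star a * a)) {a : A} (ha : 0 ≤ a) :
    0 ≤ φ a := by
  have h := hpos (CFC.sqrt a)
  rwa [(CFC.sqrt_nonneg (a := a)).star_eq, CFC.sqrt_mul_sqrt_self a ha] at h

lemma aux_im (φ : A →L[ℂ] ℂ) (hpos : ∀ a : A, 0 ≤ φ (star a * a)) {y : A}
    (hy : IsSelfAdjoint y) : (φ y).im = 0 := by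
  have h1 : 0 ≤ φ y⁺ := aux_nonneg φ hpos (CFC.posPart_nonneg y)
  have h2 : 0 ≤ φ y⁻ := aux_nonneg φ hpos (CFC.negPart_nonneg y)
  rw [Complex.nonneg_iff] at h1 h2
  rw [← CFC.posPart_sub_negPart y hy, map_sub, Complex.sub_im, ← h1.2, ← h2.2, sub_zero]

lemma aux_star (φ : A →L[ℂ] ℂ) (hpos : ∀ a : A, 0 ≤ φ (star a * a)) (a : A) :
    φ (star a) = (starRingEnd ℂ) (φ a) := by
  have hdec := realPart_add_I_smul_imaginaryPart a
  have hdec' : star a = (ℜ a : A) - Complex.I • (ℑ a : A) := by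
    nth_rw 1 [← hdec]
    rw [star_add, star_smul, (ℜ a).prop.star_eq, (ℑ a).prop.star_eq, Complex.star_def,
      Complex.conj_I, neg_smul, ← sub_eq_add_neg]
  have h1 : (φ (ℜ a : A)).im = 0 := aux_im φ hpos (ℜ a).prop
  have h2 : (φ (ℑ a : A)).im = 0 := aux_im φ hpos (ℑ a).prop
  have c1 : (starRingEnd ℂ) (φ (ℜ a : A)) = φ (ℜ a : A) := Complex.conj_eq_iff_im.mpr h1
  have c2 : (starRingEnd ℂ) (φ (ℑ a : A)) = φ (ℑ a : A) := Complex.conj_eq_iff_im.mpr h2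
  have ha : φ a = φ (ℜ a : A) + Complex.I * φ (ℑ a : A) := by
    conv_lhs => rw [← hdec, map_add, map_smul, smul_eq_mul]
  rw [hdec', map_sub, map_smul, smul_eq_mul, ha, map_add, map_mul, c1, c2, Complex.conj_I]
  ring

lemma aux_norm_posPart [Nontrivial A] {x : A} (hx : ‖x‖ ≤ 1) : ‖x⁺‖ ≤ 1 := by
  rw [CFC.posPart_def]
  refine norm_cfcₙ_le fun t ht => ?_
  rw [quasispectrum_eq_spectrum_union_zero] at ht
  rcases ht with ht | ht
  · have h := spectrum.norm_le_norm_of_mem ht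
    rw [Real.norm_eq_abs] at h ⊢
    rcases le_total t 0 with h0 | h0
    · simp [posPart_eq_zero.mpr h0]
    · rw [posPart_eq_self.mpr h0]; linarith [abs_nonneg t, le_abs_self t]
  · simp only [Set.mem_singleton_iff] at ht
    simp [ht]

lemma aux_norm_negPart [Nontrivial A] {x : A} (hx : ‖x‖ ≤ 1) : ‖x⁻‖ ≤ 1 := by
  rw [CFC.negPart_def]
  refine norm_cfcₙ_le fun t ht => ?_
  rw [quasispectrum_eq_spectrum_union_zero] at ht
  rcases ht with ht | ht
  · have h := spectrum.norm_le_norm_of_mem ht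
    rw [Real.norm_eq_abs] at h ⊢
    rcases le_total t 0 with h0 | h0
    · rw [negPart_eq_neg.mpr h0, abs_neg]; linarith [neg_abs_le t]
    · simp [negPart_eq_zero.mpr h0]
  · simp only [Set.mem_singleton_iff] at ht
    simp [ht]

end Aux

set_option maxHeartbeats 1000000 in
set_option synthInstance.maxHeartbeats 200000 in
/-- Let `A` be a unital C*-algebra and `φ 0, …, φ n` positive functionals in the
unit ball of `A'` which are `(1-δ)`-equivalent to the `ℓ¹_{n+1}` basis.  Then
there is a selfadjoint `x` in the unit ball of `A` with positive part `x⁺` and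
negative part `x⁻` such that `φ k (x⁺) > 1 - 4nδ` for `k < n` and
`φ n (x⁻) > 1 - 4δ`. -/
theorem exists_separating_selfadjoint
    {A : Type*} [CStarAlgebra A] [PartialOrder A] [StarOrderedRing A] (n : ℕ) (δ : ℝ) (hδ : 0 < δ)
    (φ : Fin (n + 1) → (A →L[ℂ] ℂ))
    (hpos : ∀ k, ∀ a : A, 0 ≤ φ k (star a * a))
    (hnorm : ∀ k, ‖φ k‖ ≤ 1)
    (hl1 : ∀ α : Fin (n + 1) → ℂ,
      (1 - δ) * ∑ k, ‖α k‖ ≤ ‖∑ k, α k • φ k‖) :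
    ∃ x xp xm : A, IsSelfAdjoint x ∧ ‖x‖ ≤ 1 ∧
      0 ≤ xp ∧ 0 ≤ xm ∧ x = xp - xm ∧ xp * xm = 0 ∧
      (∀ k : Fin n, 1 - 4 * n * δ < (φ k.castSucc xp).re) ∧
      1 - 4 * δ < (φ (Fin.last n) xm).re := by
  rcases subsingleton_or_nontrivial A with hA | hA
  · -- trivial algebra: all functionals vanish, forcing δ ≥ 1
    have hφ0 : ∀ k : Fin (n + 1), φ k = 0 := fun k => by
      ext a; rw [Subsingleton.elim a 0, map_zero]; rfl
    have hδ1 : 1 ≤ δ := by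
      have h := hl1 (fun k => if k = Fin.last n then 1 else 0)
      have hz : (∑ k : Fin (n+1), (if k = Fin.last n then (1:ℂ) else 0) • φ k) = 0 := by
        ext a
        rw [Subsingleton.elim a 0, map_zero, map_zero]
      rw [hz, norm_zero] at h
      have hsum : (∑ k : Fin (n+1), ‖(if k = Fin.last n then (1:ℂ) else 0)‖) = 1 := by
        rw [Finset.sum_eq_single (Fin.last n)] <;> simp +contextual
      rw [hsum, mul_one] at h
      linarith
    refine ⟨0, 0, 0, by simp [IsSelfAdjoint], by simp, le_refl 0, le_refl 0, by simp, by simp,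
      fun k => ?_, ?_⟩
    · have hn : (1 : ℝ) ≤ n := by exact_mod_cast k.pos
      simp only [map_zero, Complex.zero_re]
      nlinarith
    · simp only [map_zero, Complex.zero_re]
      linarith
  · -- main case
    have hbound : ∀ (k : Fin (n+1)) (b : A), 0 ≤ b → ‖b‖ ≤ 1 →
        0 ≤ (φ k b).re ∧ (φ k b).re ≤ 1 := by
      intro k b hb hb1
      refine ⟨(Complex.nonneg_iff.mp (aux_nonneg (φ k) (hpos k) hb)).1, ?_⟩
      calc (φ k b).re ≤ ‖φ k b‖ := Complex.re_le_norm _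
        _ = ‖φ k b‖ := rfl
        _ ≤ ‖φ k‖ * ‖b‖ := (φ k).le_opNorm b
        _ ≤ 1 * 1 := mul_le_mul (hnorm k) hb1 (norm_nonneg b) (le_trans (norm_nonneg _) (hnorm k))
        _ = 1 := one_mul 1
    set α : Fin (n+1) → ℂ := fun k => if k = Fin.last n then -1 else (n : ℂ)⁻¹ with hα
    set ψ : A →L[ℂ] ℂ := ∑ k, α k • φ k with hψdef
    set m : ℝ := (n : ℝ) * (n : ℝ)⁻¹ + 1 with hmdef
    have hαconj : ∀ k, (starRingEnd ℂ) (α k) = α k := by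
      intro k
      simp only [hα]
      split_ifs <;> simp [map_inv₀]
    have hinv0 : (0:ℝ) ≤ (n : ℝ)⁻¹ := by positivity
    have hninv : (n : ℝ) * (n : ℝ)⁻¹ ≤ 1 := by
      rcases Nat.eq_zero_or_pos n with h | h
      · simp [h]
      · rw [mul_inv_cancel₀ (by exact_mod_cast h.ne' : (n:ℝ) ≠ 0)]
    have hninv0 : (0:ℝ) ≤ (n : ℝ) * (n : ℝ)⁻¹ := by positivity
    have hm1 : 1 ≤ m := by simp only [hmdef]; linarith
    have hm2 : m ≤ 2 := by simp only [hmdef]; linarith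
    have hmα : (∑ k, ‖α k‖) = m := by
      rw [Fin.sum_univ_castSucc]
      have h1 : ∀ j : Fin n, ‖α j.castSucc‖ = (n : ℝ)⁻¹ := by
        intro j
        rw [hα]
        simp only [(Fin.castSucc_lt_last j).ne, if_false]
        rw [norm_inv, Complex.norm_natCast]
      have h2 : ‖α (Fin.last n)‖ = 1 := by simp [hα]
      simp only [h1, h2, Finset.sum_const, Finset.card_univ, Fintype.card_fin, nsmul_eq_mul,
        hmdef]
    have hψnorm : (1 - δ) * m ≤ ‖ψ‖ := hmα ▸ hl1 α
    set t : ℝ := m * (1 - 2 * δ) with htdef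
    have htm : t < (1 - δ) * m := by nlinarith
    obtain ⟨a, ha1, hta⟩ : ∃ a : A, ‖a‖ ≤ 1 ∧ t < ‖ψ a‖ := by
      by_contra hcon
      push_neg at hcon
      have ht0 : 0 ≤ t := by simpa using hcon 0 (by simp)
      have hb : ‖ψ‖ ≤ t := by
        refine ψ.opNorm_le_bound ht0 fun z => ?_
        rcases eq_or_ne z 0 with rfl | hz
        · simp
        · have hzn : (0:ℝ) < ‖z‖ := norm_pos_iff.mpr hz
          have h2 := hcon ((↑(‖z‖⁻¹) : ℂ) • z) (by
            rw [norm_smul, Complex.norm_real, Real.norm_eq_abs, abs_of_nonneg (by positivity),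
              inv_mul_cancel₀ hzn.ne'])
          rw [map_smul, smul_eq_mul, norm_mul, Complex.norm_real, Real.norm_eq_abs,
            abs_of_nonneg (by positivity)] at h2
          have h3 := mul_le_mul_of_nonneg_left h2 hzn.le
          rw [← mul_assoc, mul_inv_cancel₀ hzn.ne', one_mul] at h3
          linarith
      linarith
    set c : ℂ := ψ a with hcdef
    set u : ℂ := if c = 0 then 1 else (starRingEnd ℂ) c / (‖c‖ : ℂ) with hudef
    have huc : u * c = (‖c‖ : ℂ) := by
      by_cases h : c = 0
      · simp [hudef, h]
      · have habs : ((‖c‖ : ℝ) : ℂ) ≠ 0 := by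
          simpa using (norm_ne_zero_iff.mpr h)
        have key : (starRingEnd ℂ) c * c = ((‖c‖ : ℝ) : ℂ) ^ 2 := by
          rw [mul_comm, Complex.mul_conj]
          norm_cast
          exact (Complex.sq_norm c).symm
        rw [hudef, if_neg h, div_mul_eq_mul_div, key, sq, mul_div_assoc, div_self habs, mul_one]
    have hunorm : ‖u‖ ≤ 1 := by
      by_cases h : c = 0
      · simp [hudef, h]
      · rw [hudef, if_neg h, norm_div, RCLike.norm_conj, Complex.norm_real, Real.norm_eq_abs,
          abs_of_nonneg (norm_nonneg c),
          div_self (norm_ne_zero_iff.mpr h)]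
    set b : A := u • a with hbdef
    have hbnorm : ‖b‖ ≤ 1 := by
      rw [hbdef, norm_smul]
      nlinarith [norm_nonneg a, norm_nonneg u]
    have hψb : ψ b = (‖c‖ : ℂ) := by rw [hbdef, map_smul, smul_eq_mul, huc]
    set x : A := (2⁻¹ : ℂ) • (b + star b) with hxdef
    have hx_sa : IsSelfAdjoint x :=
      IsSelfAdjoint.smul (r := (2⁻¹ : ℂ))
      (by rw [isSelfAdjoint_iff, star_inv₀, Complex.star_def, map_ofNat]) (IsSelfAdjoint.add_star_self b)
    have hxnorm : ‖x‖ ≤ 1 := by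
      rw [hxdef]
      calc ‖(2⁻¹ : ℂ) • (b + star b)‖ = ‖(2⁻¹ : ℂ)‖ * ‖b + star b‖ := norm_smul _ _
        _ ≤ 2⁻¹ * (‖b‖ + ‖star b‖) := by
            rw [show ‖(2⁻¹:ℂ)‖ = 2⁻¹ by simp]
            exact mul_le_mul_of_nonneg_left (norm_add_le _ _) (by norm_num)
        _ ≤ 1 := by rw [norm_star]; linarith
    have hψstar : ψ (star b) = (starRingEnd ℂ) (ψ b) := by
      have happ : ∀ y : A, ψ y = ∑ k, α k * φ k y := fun y => by
        rw [hψdef]; simp [ContinuousLinearMap.sum_apply]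
      rw [happ, happ, map_sum]
      refine Finset.sum_congr rfl fun k _ => ?_
      rw [aux_star (φ k) (hpos k) b, map_mul, hαconj k]
    have hψx : ψ x = (‖c‖ : ℂ) := by
      rw [hxdef, map_smul, map_add, hψstar, hψb, Complex.conj_ofReal, smul_eq_mul]
      ring
    have htre : t < (ψ x).re := by
      rw [hψx, Complex.ofReal_re]
      rwa [hcdef] at hta
    have hxp : (0:A) ≤ x⁺ := CFC.posPart_nonneg x
    have hxm : (0:A) ≤ x⁻ := CFC.negPart_nonneg x
    have hxpn := aux_norm_posPart hxnorm
    have hxmn := aux_norm_negPart hxnorm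
    have hr0 : ∀ k, 0 ≤ (φ k x⁺).re := fun k => (hbound k _ hxp hxpn).1
    have hr1 : ∀ k, (φ k x⁺).re ≤ 1 := fun k => (hbound k _ hxp hxpn).2
    have hs0 : ∀ k, 0 ≤ (φ k x⁻).re := fun k => (hbound k _ hxm hxmn).1
    have hs1 : ∀ k, (φ k x⁻).re ≤ 1 := fun k => (hbound k _ hxm hxmn).2
    have hsplit : (ψ x).re = (∑ j : Fin n, (n:ℝ)⁻¹ * ((φ j.castSucc x⁺).re - (φ j.castSucc x⁻).re))
        - ((φ (Fin.last n) x⁺).re - (φ (Fin.last n) x⁻).re) := by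
      have h1 : ψ x = ∑ k, α k * (φ k x⁺ - φ k x⁻) := by
        rw [hψdef]
        simp only [ContinuousLinearMap.sum_apply, ContinuousLinearMap.smul_apply, smul_eq_mul]
        refine Finset.sum_congr rfl fun k _ => ?_
        rw [← map_sub, CFC.posPart_sub_negPart x hx_sa]
      rw [h1, Complex.re_sum, Fin.sum_univ_castSucc]
      have h2 : ∀ j : Fin n, (α j.castSucc * (φ j.castSucc x⁺ - φ j.castSucc x⁻)).re
          = (n:ℝ)⁻¹ * ((φ j.castSucc x⁺).re - (φ j.castSucc x⁻).re) := by
        intro j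
        have he : α j.castSucc = (((n:ℝ)⁻¹ : ℝ) : ℂ) := by
          rw [hα]
          simp only [(Fin.castSucc_lt_last j).ne, if_false]
          push_cast
          ring
        rw [he, Complex.re_ofReal_mul, Complex.sub_re]
      have h3 : (α (Fin.last n) * (φ (Fin.last n) x⁺ - φ (Fin.last n) x⁻)).re
          = -((φ (Fin.last n) x⁺).re - (φ (Fin.last n) x⁻).re) := by
        have he : α (Fin.last n) = -1 := by simp [hα]
        rw [he, neg_one_mul, Complex.neg_re, Complex.sub_re]
      rw [Finset.sum_congr rfl fun j _ => h2 j, h3]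
      ring
    set S : ℝ := ∑ j : Fin n, (φ j.castSucc x⁺).re with hSdef
    set T : ℝ := ∑ j : Fin n, (φ j.castSucc x⁻).re with hTdef
    have hS0 : 0 ≤ S := Finset.sum_nonneg fun j _ => hr0 _
    have hT0 : 0 ≤ T := Finset.sum_nonneg fun j _ => hs0 _
    have hSn : S ≤ (n : ℝ) := by
      calc S ≤ (Finset.univ : Finset (Fin n)).card • (1:ℝ) :=
          Finset.sum_le_card_nsmul _ _ 1 fun j _ => hr1 _
        _ = (n : ℝ) := by simp
    have hkey : t < (n:ℝ)⁻¹ * (S - T)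
        - ((φ (Fin.last n) x⁺).re - (φ (Fin.last n) x⁻).re) := by
      have e1 : (∑ j : Fin n, (n:ℝ)⁻¹ * ((φ j.castSucc x⁺).re - (φ j.castSucc x⁻).re))
          = (n:ℝ)⁻¹ * (S - T) := by
        rw [← Finset.mul_sum, Finset.sum_sub_distrib]
      rw [hsplit, e1] at htre
      exact htre
    clear_value S T m t
    refine ⟨x, x⁺, x⁻, hx_sa, hxnorm, hxp, hxm, (CFC.posPart_sub_negPart x hx_sa).symm,
      CFC.posPart_mul_negPart x, fun k => ?_, ?_⟩
    · have hn : 0 < n := k.pos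
      have hnR : (0:ℝ) < n := by exact_mod_cast hn
      have hmul : (n:ℝ) * (n:ℝ)⁻¹ = 1 := mul_inv_cancel₀ hnR.ne'
      have hm2' : m = 2 := by rw [hmdef, hmul]; norm_num
      have h4 : t - 1 < (n:ℝ)⁻¹ * (S - T) := by
        have := hr0 (Fin.last n)
        have := hs1 (Fin.last n)
        linarith
      have h5 : (n:ℝ) * (t - 1) < S - T := by
        have h5a := mul_lt_mul_of_pos_left h4 hnR
        rw [← mul_assoc, hmul, one_mul] at h5a
        linarith
      have h6 : (n:ℝ) * (t - 1) < S := by linarith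
      have hmem : k ∈ (Finset.univ : Finset (Fin n)) := Finset.mem_univ k
      have herase : (∑ j ∈ Finset.univ.erase k, (φ j.castSucc x⁺).re)
          + (φ k.castSucc x⁺).re = S := by
        rw [hSdef]; exact Finset.sum_erase_add _ _ hmem
      have hcard : (((Finset.univ : Finset (Fin n)).erase k).card : ℝ) = (n : ℝ) - 1 := by
        rw [Finset.card_erase_of_mem hmem, Finset.card_univ, Fintype.card_fin,
          Nat.cast_sub hn, Nat.cast_one]
      have herb : (∑ j ∈ Finset.univ.erase k, (φ j.castSucc x⁺).re) ≤ (n:ℝ) - 1 := by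
        calc (∑ j ∈ Finset.univ.erase k, (φ j.castSucc x⁺).re)
            ≤ ((Finset.univ : Finset (Fin n)).erase k).card • (1:ℝ) :=
              Finset.sum_le_card_nsmul _ _ 1 fun j _ => hr1 _
          _ = (((Finset.univ : Finset (Fin n)).erase k).card : ℝ) := by
              rw [nsmul_eq_mul, mul_one]
          _ = (n:ℝ) - 1 := hcard
      have h7 : (n:ℝ) * (t - 1) - ((n:ℝ) - 1) = 1 - 4 * n * δ := by
        rw [htdef, hm2']; ring
      linarith
    · have h4 : (n:ℝ)⁻¹ * S ≤ (n:ℝ) * (n:ℝ)⁻¹ := by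
        rw [mul_comm ((n:ℝ)) ((n:ℝ)⁻¹)]
        exact mul_le_mul_of_nonneg_left hSn hinv0
      have h5 : 0 ≤ (n:ℝ)⁻¹ * T := mul_nonneg hinv0 hT0
      have h6 : (0:ℝ) ≤ (2 - m) * δ := mul_nonneg (by linarith) hδ.le
      have ht'' : t = m - 2 * (m * δ) := by rw [htdef]; ring
      have hexp : (n:ℝ)⁻¹ * (S - T) = (n:ℝ)⁻¹ * S - (n:ℝ)⁻¹ * T := by ring
      rw [hexp] at hkey
      have step1 : t - (↑n * (↑n)⁻¹) < ((φ (Fin.last n)) x⁻).re := by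
        linarith only [hkey, h4, h5, hr0 (Fin.last n)]
      have h7 : ((φ (Fin.last n)) x⁻).re > 1 - 2 * (m * δ) := by
        linarith only [step1, hmdef, ht'']
      nlinarith [h6, h7, hδ]
end

section
/- Let (A_i)_{i∈ℕ} be a family of C*-algebras, U a free ultrafilter on ℕ, and A = (A_i)/U their Banach-space ultraproduct, which is canonically a C*-algebra. If ψ = [ψ_i]_U ∈ A' is a functional represented by a bounded family (ψ_i) with ψ_i ∈ A_i', then |ψ| = [|ψ_i|]_U and |ψ*| = [|ψ_i*|]_U, i.e., the absolute value from polar decomposition commutes with the ultraproduct construction. -/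
open scoped ComplexOrder
open Filter Topology

universe u

/-- A witness that `absψ` is the absolute value `|ψ|` of the functional `ψ` on a
C*-algebra `A`: in some ambient unital C*-algebra `B` (playing the role of the
enveloping von Neumann algebra `A''`) into which `A` embeds isometrically and to
which `ψ` extends with the same norm, there is a partial isometry `u` realizing
the polar decomposition `ψ = u |ψ|`, `|ψ| = u* ψ`. -/
structure PolarWitness (A : Type u) [NonUnitalCStarAlgebra A]
    (ψ absψ : A →L[ℂ] ℂ) : Type (u + 1) where
  B : Type
  [instRing : NormedRing B]
  [instStarRing : StarRing B]
  [instCStar : CStarRing B]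
  [instAlg : NormedAlgebra ℂ B]
  [instStarMod : StarModule ℂ B]
  [instComplete : CompleteSpace B]
  ι : A → B
  ι_add : ∀ x y, ι (x + y) = ι x + ι y
  ι_smul : ∀ (c : ℂ) (x : A), ι (c • x) = c • ι x
  ι_mul : ∀ x y, ι (x * y) = ι x * ι y
  ι_star : ∀ x, ι (star x) = star (ι x)
  ι_isometry : ∀ x, ‖ι x‖ = ‖x‖
  Φ : B →L[ℂ] ℂ
  absΦ : B →L[ℂ] ℂ
  u : B
  hΦ : ∀ x, Φ (ι x) = ψ x
  hΦnorm : ‖Φ‖ = ‖ψ‖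
  hu : u * star u * u = u
  hu1 : ‖u‖ ≤ 1
  habsΦpos : ∀ b, 0 ≤ absΦ (star b * b)
  habsΦnorm : ‖absΦ‖ = ‖ψ‖
  hpolar : ∀ b, Φ b = absΦ (b * u)
  habs : ∀ b, absΦ b = Φ (b * star u)
  habsψ : ∀ x, absΦ (ι x) = absψ x

/-- `absψ` is the absolute value `|ψ|` from the polar decomposition of `ψ`. -/
def IsAbsValue {A : Type u} [NonUnitalCStarAlgebra A] (ψ absψ : A →L[ℂ] ℂ) : Prop :=
  Nonempty (PolarWitness A ψ absψ)

/-- A family `x i ∈ A i` is (norm-)bounded. -/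
def BddFamily {A : ℕ → Type u} [∀ i, NonUnitalCStarAlgebra (A i)]
    (x : ∀ i, A i) : Prop := ∃ C : ℝ, ∀ i, ‖x i‖ ≤ C


section CS
variable {B : Type*} [NormedRing B] [StarRing B] [NormedAlgebra ℂ B] [StarModule ℂ B]

lemma pos_diag_re (φ : B →L[ℂ] ℂ) (hpos : ∀ b, 0 ≤ φ (star b * b)) (b : B) :
    (φ (star b * b)).im = 0 ∧ 0 ≤ (φ (star b * b)).re := by
  have := hpos b
  rw [Complex.nonneg_iff] at this
  exact ⟨this.2.symm, this.1⟩

lemma herm_symm (φ : B →L[ℂ] ℂ) (hpos : ∀ b, 0 ≤ φ (star b * b)) (b c : B) :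
    φ (star c * b) = starRingEnd ℂ (φ (star b * c)) := by
  have h1 : ((φ (star b * c)) + (φ (star c * b))).im = 0 := by
    have e : star (b + c) * (b + c) = star b * b + (star b * c + (star c * b + star c * c)) := by
      rw [star_add]
      simp only [mul_add, add_mul]
      abel
    have h := (pos_diag_re φ hpos (b + c)).1
    rw [e] at h
    simp only [map_add, Complex.add_im] at h ⊢
    have hb := (pos_diag_re φ hpos b).1
    have hc := (pos_diag_re φ hpos c).1
    linarith
  have h2 : ((φ (star b * c)) - (φ (star c * b))).re = 0 := by
    have hst : star (b + (Complex.I : ℂ) • c) = star b - Complex.I • star c := by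
      rw [star_add, star_smul, Complex.star_def, Complex.conj_I, neg_smul, sub_eq_add_neg]
    have e : star (b + (Complex.I : ℂ) • c) * (b + (Complex.I : ℂ) • c)
        = star b * b + Complex.I • (star b * c) - Complex.I • (star c * b) + star c * c := by
      rw [hst, sub_mul, mul_add, mul_add, smul_mul_assoc, smul_mul_assoc, mul_smul_comm,
        mul_smul_comm, smul_smul, Complex.I_mul_I, neg_one_smul]
      abel
    have h := (pos_diag_re φ hpos (b + Complex.I • c)).1
    rw [e] at h
    simp only [map_add, map_sub, map_smul, Complex.add_im, Complex.sub_im, Complex.smul_im,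
      Complex.smul_re, smul_eq_mul, Complex.mul_im, Complex.mul_re, Complex.I_re,
      Complex.I_im] at h
    have hb := (pos_diag_re φ hpos b).1
    have hc := (pos_diag_re φ hpos c).1
    simp only [Complex.sub_re]
    linarith
  apply Complex.ext
  · simp only [Complex.sub_re] at h2
    simp only [Complex.conj_re]
    linarith
  · simp only [Complex.add_im] at h1
    simp only [Complex.conj_im]
    linarith

lemma cs_ineq (φ : B →L[ℂ] ℂ) (hpos : ∀ b, 0 ≤ φ (star b * b)) (b c : B) :
    ‖φ (star b * c)‖ ^ 2 ≤ (φ (star b * b)).re * (φ (star c * c)).re := by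
  set s := φ (star b * c) with hs
  rcases eq_or_ne s 0 with h0 | h0
  · rw [h0]
    simp only [norm_zero, ne_eq, OfNat.ofNat_ne_zero, not_false_eq_true, zero_pow]
    exact mul_nonneg (pos_diag_re φ hpos b).2 (pos_diag_re φ hpos c).2
  · set lam : ℂ := s / ‖s‖ with hlam
    have hns : (‖s‖ : ℂ) ≠ 0 := by
      simpa using norm_ne_zero_iff.mpr h0
    have hcs : (starRingEnd ℂ) s * s = ((‖s‖ : ℂ) * ‖s‖) := by
      rw [Complex.conj_mul']
      norm_cast
      ring
    have h1 : (starRingEnd ℂ) lam * lam = 1 := by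
      rw [hlam, map_div₀, Complex.conj_ofReal, div_mul_div_comm, hcs,
        div_self (mul_ne_zero hns hns)]
    have h2 : (starRingEnd ℂ) lam * s = (‖s‖ : ℂ) := by
      rw [hlam, map_div₀, Complex.conj_ofReal, div_mul_eq_mul_div, hcs,
        mul_div_assoc, div_self hns, mul_one]
    have h3 : lam * (starRingEnd ℂ) s = (‖s‖ : ℂ) := by
      have := congrArg (starRingEnd ℂ) h2
      simpa [mul_comm, Complex.conj_ofReal] using this
    have hquad : ∀ t : ℝ, 0 ≤ (φ (star c * c)).re * (t * t) + (2 * ‖s‖) * t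
        + (φ (star b * b)).re := by
      intro t
      have key := (pos_diag_re φ hpos (lam • b + (t : ℂ) • c)).2
      have e : star (lam • b + (t : ℂ) • c) * (lam • b + (t : ℂ) • c)
          = ((starRingEnd ℂ) lam * lam) • (star b * b)
            + (((starRingEnd ℂ) lam * (t : ℂ)) • (star b * c)
            + (((t : ℂ) * lam) • (star c * b) + ((t : ℂ) * (t : ℂ)) • (star c * c))) := by
        rw [star_add, star_smul, star_smul, Complex.star_def, Complex.conj_ofReal]
        simp only [mul_add, add_mul, smul_mul_assoc, mul_smul_comm, smul_smul, smul_add]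
        module
      rw [e] at key
      simp only [map_add, map_smul, smul_eq_mul] at key
      rw [herm_symm φ hpos b c] at key
      have hv : ((starRingEnd ℂ) lam * lam) * φ (star b * b)
          + (((starRingEnd ℂ) lam * (t : ℂ)) * s
          + (((t : ℂ) * lam) * ((starRingEnd ℂ) s) + ((t : ℂ) * (t : ℂ)) * φ (star c * c)))
          = φ (star b * b) + ((2 * t * ‖s‖ : ℝ) : ℂ) + ((t * t : ℝ) : ℂ) * φ (star c * c) := by
        push_cast
        linear_combination φ (star b * b) * h1 + (t : ℂ) * h2 + (t : ℂ) * h3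
      rw [← hs, hv] at key
      simp only [Complex.add_re, Complex.ofReal_re, Complex.re_ofReal_mul] at key
      linarith
    have hd := discrim_le_zero hquad
    rw [discrim] at hd
    nlinarith [norm_nonneg s]


lemma herm (φ : B →L[ℂ] ℂ) (hpos : ∀ b, 0 ≤ φ (star b * b)) (b : B) :
    φ (star b) = starRingEnd ℂ (φ b) := by
  have h := herm_symm φ hpos b 1
  rw [star_one, one_mul, mul_one] at h
  rw [h, Complex.conj_conj]

lemma re_le_opNorm {E : Type*} [SeminormedAddCommGroup E] [NormedSpace ℂ E]
    (φ : E →L[ℂ] ℂ) (y : E) : (φ y).re ≤ ‖φ‖ * ‖y‖ := by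
  calc (φ y).re ≤ |(φ y).re| := le_abs_self _
    _ ≤ ‖φ y‖ := Complex.abs_re_le_norm _
    _ = ‖φ y‖ := rfl
    _ ≤ ‖φ‖ * ‖y‖ := φ.le_opNorm y

lemma norm_one_le_of_cstar [CStarRing B] : ‖(1 : B)‖ ≤ 1 := by
  have h : ‖star (1 : B) * 1‖ = ‖(1 : B)‖ * ‖(1 : B)‖ := CStarRing.norm_star_mul_self
  rw [star_one, one_mul] at h
  nlinarith [norm_nonneg (1 : B)]

end CS

lemma key_estimate {A : Type u} [NonUnitalCStarAlgebra A] {ψ absψ : A →L[ℂ] ℂ}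
    (w : PolarWitness A ψ absψ) {a : A} (ha : ‖a‖ ≤ 1) (x : A) :
    ‖absψ x - ψ (x * a)‖ ≤ ‖x‖ * Real.sqrt (2 * ‖ψ‖ * (‖ψ‖ - (ψ a).re)) := by
  letI := w.instRing
  letI := w.instStarRing
  letI := w.instCStar
  letI := w.instAlg
  letI := w.instStarMod
  set φ := w.absΦ with hφ
  have hpos := w.habsΦpos
  set w0 := w.ι a * w.u with hw0
  have hw0n : ‖w0‖ ≤ 1 := by
    calc ‖w.ι a * w.u‖ ≤ ‖w.ι a‖ * ‖w.u‖ := norm_mul_le _ _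
      _ ≤ 1 * 1 := by
          apply mul_le_mul _ w.hu1 (norm_nonneg _) zero_le_one
          rw [w.ι_isometry]; exact ha
      _ = 1 := one_mul 1
  have hφw0 : φ w0 = ψ a := by
    rw [hw0, ← w.hpolar, w.hΦ]
  have hrw : absψ x - ψ (x * a) = φ (star (star (w.ι x)) * (1 - w0)) := by
    rw [star_star, mul_sub, mul_one, map_sub, w.habsψ x]
    congr 1
    rw [← w.hΦ (x * a), w.hpolar, w.ι_mul, mul_assoc]
  have hcs := cs_ineq φ hpos (star (w.ι x)) (1 - w0)
  rw [star_star] at hcs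
  have bound1 : (φ (w.ι x * star (w.ι x))).re ≤ ‖ψ‖ * (‖x‖ * ‖x‖) := by
    calc (φ (w.ι x * star (w.ι x))).re ≤ ‖φ‖ * ‖w.ι x * star (w.ι x)‖ := re_le_opNorm _ _
      _ ≤ ‖ψ‖ * (‖x‖ * ‖x‖) := by
          rw [hφ, w.habsΦnorm]
          apply mul_le_mul_of_nonneg_left _ (norm_nonneg ψ)
          calc ‖w.ι x * star (w.ι x)‖ ≤ ‖w.ι x‖ * ‖star (w.ι x)‖ := norm_mul_le _ _
            _ = ‖x‖ * ‖x‖ := by rw [norm_star, w.ι_isometry]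
  have hvv : star (1 - w0) * (1 - w0) = 1 - w0 - star w0 + star w0 * w0 := by
    rw [star_sub, star_one, sub_mul, mul_sub, mul_sub, one_mul, one_mul, mul_one]
    abel
  have bound2 : (φ (star (1 - w0) * (1 - w0))).re ≤ 2 * ‖ψ‖ - 2 * (ψ a).re := by
    rw [hvv, map_add, map_sub, map_sub, Complex.add_re, Complex.sub_re, Complex.sub_re]
    have e1 : (φ (1 : w.B)).re ≤ ‖ψ‖ := by
      calc (φ (1 : w.B)).re ≤ ‖φ‖ * ‖(1 : w.B)‖ := re_le_opNorm _ _
        _ ≤ ‖ψ‖ * 1 := by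
            rw [hφ, w.habsΦnorm]
            exact mul_le_mul_of_nonneg_left norm_one_le_of_cstar (norm_nonneg ψ)
        _ = ‖ψ‖ := mul_one _
    have e2 : (φ (star w0)).re = (ψ a).re := by
      rw [herm φ hpos, Complex.conj_re, hφw0]
    have e3 : (φ (star w0 * w0)).re ≤ ‖ψ‖ := by
      calc (φ (star w0 * w0)).re ≤ ‖φ‖ * ‖star w0 * w0‖ := re_le_opNorm _ _
        _ ≤ ‖ψ‖ * 1 := by
            rw [hφ, w.habsΦnorm]
            apply mul_le_mul_of_nonneg_left _ (norm_nonneg ψ)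
            calc ‖star w0 * w0‖ ≤ ‖star w0‖ * ‖w0‖ := norm_mul_le _ _
              _ = ‖w0‖ * ‖w0‖ := by rw [norm_star]
              _ ≤ 1 * 1 := mul_le_mul hw0n hw0n (norm_nonneg _) zero_le_one
              _ = 1 := one_mul 1
        _ = ‖ψ‖ := mul_one _
    rw [hφw0, e2]
    linarith
  have hnn1 := (pos_diag_re φ hpos (star (w.ι x))).2
  rw [star_star] at hnn1
  have hnn2 := (pos_diag_re φ hpos (1 - w0)).2
  have hsq : ‖absψ x - ψ (x * a)‖ ^ 2 ≤ ‖x‖ ^ 2 * (2 * ‖ψ‖ * (‖ψ‖ - (ψ a).re)) := by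
    rw [hrw]
    calc ‖φ (star (star (w.ι x)) * (1 - w0))‖ ^ 2
        ≤ (φ (w.ι x * star (w.ι x))).re * (φ (star (1 - w0) * (1 - w0))).re := by
          rw [star_star]; exact hcs
      _ ≤ ‖x‖ ^ 2 * (2 * ‖ψ‖ * (‖ψ‖ - (ψ a).re)) := by nlinarith [norm_nonneg ψ, norm_nonneg x]
  have hre : (ψ a).re ≤ ‖ψ‖ := by
    calc (ψ a).re ≤ ‖ψ‖ * ‖a‖ := re_le_opNorm ψ a
      _ ≤ ‖ψ‖ * 1 := mul_le_mul_of_nonneg_left ha (norm_nonneg ψ)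
      _ = ‖ψ‖ := mul_one _
  have hD : 0 ≤ 2 * ‖ψ‖ * (‖ψ‖ - (ψ a).re) := by
    apply mul_nonneg (by positivity)
    linarith
  calc ‖absψ x - ψ (x * a)‖ = Real.sqrt (‖absψ x - ψ (x * a)‖ ^ 2) :=
        (Real.sqrt_sq (norm_nonneg _)).symm
    _ ≤ Real.sqrt (‖x‖ ^ 2 * (2 * ‖ψ‖ * (‖ψ‖ - (ψ a).re))) := Real.sqrt_le_sqrt hsq
    _ = ‖x‖ * Real.sqrt (2 * ‖ψ‖ * (‖ψ‖ - (ψ a).re)) := by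
        rw [Real.sqrt_mul (sq_nonneg _), Real.sqrt_sq (norm_nonneg _)]


lemma exists_norming {E : Type u} [NormedAddCommGroup E] [NormedSpace ℂ E]
    (f : E →L[ℂ] ℂ) {ε : ℝ} (hε : 0 < ε) : ∃ a : E, ‖a‖ ≤ 1 ∧ ‖f‖ - ε < (f a).re := by
  obtain ⟨x, hx1, hx2⟩ := ContinuousLinearMap.exists_lt_apply_of_lt_opNorm (𝕜 := ℂ) (𝕜₂ := ℂ)
    (E := E) (F := ℂ) f (show ‖f‖ - ε < ‖f‖ by linarith)
  rcases eq_or_ne (f x) 0 with h0 | h0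
  · refine ⟨0, by simp, ?_⟩
    rw [h0, norm_zero] at hx2
    simpa using hx2
  · refine ⟨((‖f x‖ : ℂ) / f x) • x, ?_, ?_⟩
    · rw [norm_smul, norm_div, Complex.norm_real, Real.norm_eq_abs, abs_norm,
        div_self (norm_ne_zero_iff.mpr h0), one_mul]
      exact hx1.le
    · rw [map_smul, smul_eq_mul, div_mul_cancel₀ _ h0, Complex.ofReal_re]
      exact hx2

lemma main_tendsto {A : ℕ → Type u} [∀ i, NonUnitalCStarAlgebra (A i)]
    {B : Type} [NonUnitalCStarAlgebra B]
    (U : Ultrafilter ℕ)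
    (q : (∀ i, A i) → B)
    (q_mul : ∀ x y, BddFamily x → BddFamily y → q (fun i => x i * y i) = q x * q y)
    (q_norm : ∀ x, BddFamily x → Tendsto (fun i => ‖x i‖) ↑U (nhds ‖q x‖))
    (q_surj : ∀ b : B, ∃ x, BddFamily x ∧ q x = b)
    (ψ absψ : B →L[ℂ] ℂ) (ψi absψi : ∀ i, A i →L[ℂ] ℂ)
    (hψibdd : ∃ C : ℝ, ∀ i, ‖ψi i‖ ≤ C)
    (hrep : ∀ x, BddFamily x → Tendsto (fun i => ψi i (x i)) ↑U (nhds (ψ (q x))))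
    (habsψ : IsAbsValue ψ absψ) (habsψi : ∀ i, IsAbsValue (ψi i) (absψi i)) :
    ∀ x, BddFamily x → Tendsto (fun i => absψi i (x i)) ↑U (nhds (absψ (q x))) := by
  classical
  obtain ⟨Cψ₀, hCψ₀⟩ := hψibdd
  set Cψ : ℝ := max Cψ₀ 0 with hCψdef
  have hCψ : ∀ i, ‖ψi i‖ ≤ Cψ := fun i => le_trans (hCψ₀ i) (le_max_left _ _)
  have hCψ0 : (0 : ℝ) ≤ Cψ := le_max_right _ _
  -- ultrafilter limit of the norms
  obtain ⟨cL, hcLmem, hcLle⟩ :=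
    (isCompact_Icc (a := (0:ℝ)) (b := Cψ)).ultrafilter_le_nhds
      (U.map fun i => ‖ψi i‖)
      (by
        rw [Filter.le_principal_iff, Ultrafilter.coe_map, Filter.mem_map]
        have : ∀ i, ‖ψi i‖ ∈ Set.Icc (0:ℝ) Cψ := fun i => ⟨norm_nonneg _, hCψ i⟩
        exact Filter.univ_mem' (f := (U : Filter ℕ)) this)
  have hcLt : Tendsto (fun i => ‖ψi i‖) ↑U (nhds cL) := by
    rwa [Tendsto, ← Ultrafilter.coe_map]
  -- ‖ψ‖ ≤ cL
  have hψle : ‖ψ‖ ≤ cL := by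
    refine ψ.opNorm_le_bound hcLmem.1 fun b => ?_
    obtain ⟨y, hy, rfl⟩ := q_surj b
    have h1 : Tendsto (fun i => ‖ψi i (y i)‖) ↑U (nhds ‖ψ (q y)‖) := (hrep y hy).norm
    have h2 : Tendsto (fun i => ‖ψi i‖ * ‖y i‖) ↑U (nhds (cL * ‖q y‖)) :=
      hcLt.mul (q_norm y hy)
    exact le_of_tendsto_of_tendsto' h1 h2 fun i => (ψi i).le_opNorm (y i)
  have hψCψ : ‖ψ‖ ≤ Cψ := hψle.trans hcLmem.2
  intro x hx
  obtain ⟨Cx₀, hCx₀⟩ := hx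
  set Cx : ℝ := max Cx₀ 0 with hCxdef
  have hCx : ∀ i, ‖x i‖ ≤ Cx := fun i => le_trans (hCx₀ i) (le_max_left _ _)
  have hCx0 : (0 : ℝ) ≤ Cx := le_max_right _ _
  have hx' : BddFamily x := ⟨Cx, hCx⟩
  have hqx : ‖q x‖ ≤ Cx := le_of_tendsto (q_norm x hx') (Filter.Eventually.of_forall hCx)
  rw [Metric.tendsto_nhds]
  intro δ hδ
  set η : ℝ := δ / (4 * (Cx + 1)) with hηdef
  have hη : 0 < η := by positivity
  set ε : ℝ := η ^ 2 / (2 * Cψ + 1) with hεdef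
  have hεpos : 0 < ε := by positivity
  -- the generic sqrt bound
  have hsqrt : ∀ ρ v : ℝ, 0 ≤ ρ → ρ ≤ Cψ → v ≤ ρ → ρ - ε ≤ v →
      Real.sqrt (2 * ρ * (ρ - v)) ≤ η := by
    intro ρ v h0 h1 h2 h3
    have harg : 2 * ρ * (ρ - v) ≤ η ^ 2 := by
      have : 2 * ρ * (ρ - v) ≤ 2 * Cψ * ε := by nlinarith
      have h4 : 2 * Cψ * ε ≤ (2 * Cψ + 1) * ε := by nlinarith
      have h5 : (2 * Cψ + 1) * ε = η ^ 2 := by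
        rw [hεdef]; field_simp
      linarith
    calc Real.sqrt (2 * ρ * (ρ - v)) ≤ Real.sqrt (η ^ 2) := Real.sqrt_le_sqrt harg
      _ = η := Real.sqrt_sq hη.le
  -- choose norming elements
  choose a ha1 ha2 using fun i => exists_norming (ψi i) hεpos
  have hab : BddFamily a := ⟨1, ha1⟩
  have hqa : ‖q a‖ ≤ 1 := le_of_tendsto (q_norm a hab) (Filter.Eventually.of_forall ha1)
  have hCxη : Cx * η ≤ δ / 4 := by
    rw [hηdef, ← mul_div_assoc, div_le_div_iff₀ (by positivity) (by norm_num)]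
    nlinarith
  -- per-index estimate
  have Ei : ∀ i, ‖absψi i (x i) - ψi i (x i * a i)‖ ≤ δ / 4 := by
    intro i
    have hkey := key_estimate (habsψi i).some (ha1 i) (x i)
    have hrea : (ψi i (a i)).re ≤ ‖ψi i‖ := by
      calc (ψi i (a i)).re ≤ ‖ψi i‖ * ‖a i‖ := re_le_opNorm _ _
        _ ≤ ‖ψi i‖ * 1 := mul_le_mul_of_nonneg_left (ha1 i) (norm_nonneg _)
        _ = ‖ψi i‖ := mul_one _
    have hs := hsqrt ‖ψi i‖ (ψi i (a i)).re (norm_nonneg _) (hCψ i) hrea (ha2 i).le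
    calc ‖absψi i (x i) - ψi i (x i * a i)‖
        ≤ ‖x i‖ * Real.sqrt (2 * ‖ψi i‖ * (‖ψi i‖ - (ψi i (a i)).re)) := hkey
      _ ≤ Cx * η := mul_le_mul (hCx i) hs (Real.sqrt_nonneg _) hCx0
      _ ≤ δ / 4 := hCxη
  -- estimate at the limit
  have EL : ‖absψ (q x) - ψ (q x * q a)‖ ≤ δ / 4 := by
    have hkey := key_estimate habsψ.some hqa (q x)
    have hre : Tendsto (fun i => (ψi i (a i)).re) ↑U (nhds (ψ (q a)).re) :=
      (Complex.continuous_re.tendsto _).comp (hrep a hab)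
    have hlow : Tendsto (fun i => ‖ψi i‖ - ε) ↑U (nhds (cL - ε)) :=
      hcLt.sub tendsto_const_nhds
    have hcLre : cL - ε ≤ (ψ (q a)).re :=
      le_of_tendsto_of_tendsto' hlow hre fun i => (ha2 i).le
    have hreψ : (ψ (q a)).re ≤ ‖ψ‖ := by
      calc (ψ (q a)).re ≤ ‖ψ‖ * ‖q a‖ := re_le_opNorm _ _
        _ ≤ ‖ψ‖ * 1 := mul_le_mul_of_nonneg_left hqa (norm_nonneg _)
        _ = ‖ψ‖ := mul_one _
    have hs : Real.sqrt (2 * ‖ψ‖ * (‖ψ‖ - (ψ (q a)).re)) ≤ η := by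
      apply hsqrt ‖ψ‖ (ψ (q a)).re (norm_nonneg _) hψCψ hreψ
      linarith
    calc ‖absψ (q x) - ψ (q x * q a)‖
        ≤ ‖q x‖ * Real.sqrt (2 * ‖ψ‖ * (‖ψ‖ - (ψ (q a)).re)) := hkey
      _ ≤ Cx * η := mul_le_mul hqx hs (Real.sqrt_nonneg _) hCx0
      _ ≤ δ / 4 := hCxη
  -- middle term
  have hxa : BddFamily (fun i => x i * a i) := by
    refine ⟨Cx, fun i => ?_⟩
    calc ‖x i * a i‖ ≤ ‖x i‖ * ‖a i‖ := norm_mul_le _ _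
      _ ≤ Cx * 1 := mul_le_mul (hCx i) (ha1 i) (norm_nonneg _) hCx0
      _ = Cx := mul_one _
  have hmid : Tendsto (fun i => ψi i (x i * a i)) ↑U (nhds (ψ (q x * q a))) := by
    have := hrep _ hxa
    rwa [q_mul x a hx' hab] at this
  have hmidev : ∀ᶠ i in ↑U, dist (ψi i (x i * a i)) (ψ (q x * q a)) < δ / 4 :=
    Metric.tendsto_nhds.mp hmid (δ / 4) (by linarith)
  filter_upwards [hmidev] with i hi
  have tri := dist_triangle4 (absψi i (x i)) (ψi i (x i * a i)) (ψ (q x * q a)) (absψ (q x))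
  have d1 : dist (absψi i (x i)) (ψi i (x i * a i)) ≤ δ / 4 := by
    rw [dist_eq_norm]; exact Ei i
  have d3 : dist (ψ (q x * q a)) (absψ (q x)) ≤ δ / 4 := by
    rw [dist_comm, dist_eq_norm]; exact EL
  calc dist (absψi i (x i)) (absψ (q x)) ≤ _ := tri
    _ < δ := by linarith [d1, d3, hi]

/-- The absolute value of functionals commutes with Banach-space ultraproducts of
C*-algebras.  Here `B` is the ultraproduct `(A_i)/U` along the free ultrafilter
`U`, presented by the quotient map `q` defined on bounded families, with
ultraproduct norm `‖q x‖ = lim_U ‖x i‖`.  If `ψ = [ψ_i]_U`, then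
`|ψ| = [|ψ_i|]_U` and `|ψ*| = [|ψ_i*|]_U`. -/
theorem absValue_commutes_with_ultraproduct
    {A : ℕ → Type u} [∀ i, NonUnitalCStarAlgebra (A i)]
    {B : Type} [NonUnitalCStarAlgebra B]
    (U : Ultrafilter ℕ) (hU : (U : Filter ℕ) ≤ Filter.cofinite)
    (q : (∀ i, A i) → B)
    (q_add : ∀ x y, BddFamily x → BddFamily y → q (fun i => x i + y i) = q x + q y)
    (q_smul : ∀ (c : ℂ) x, BddFamily x → q (fun i => c • x i) = c • q x)
    (q_mul : ∀ x y, BddFamily x → BddFamily y → q (fun i => x i * y i) = q x * q y)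
    (q_star : ∀ x, BddFamily x → q (fun i => star (x i)) = star (q x))
    (q_norm : ∀ x, BddFamily x → Tendsto (fun i => ‖x i‖) ↑U (nhds ‖q x‖))
    (q_surj : ∀ b : B, ∃ x, BddFamily x ∧ q x = b)
    (ψ ψstar absψ absψstar : B →L[ℂ] ℂ)
    (ψi ψstari absψi absψstari : ∀ i, A i →L[ℂ] ℂ)
    (hψibdd : ∃ C : ℝ, ∀ i, ‖ψi i‖ ≤ C)
    (hrep : ∀ x, BddFamily x → Tendsto (fun i => ψi i (x i)) ↑U (nhds (ψ (q x))))
    (hψstar : ∀ b : B, ψstar b = starRingEnd ℂ (ψ (star b)))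
    (hψstari : ∀ i (a : A i), ψstari i a = starRingEnd ℂ (ψi i (star a)))
    (habsψ : IsAbsValue ψ absψ) (habsψstar : IsAbsValue ψstar absψstar)
    (habsψi : ∀ i, IsAbsValue (ψi i) (absψi i))
    (habsψstari : ∀ i, IsAbsValue (ψstari i) (absψstari i)) :
    (∀ x, BddFamily x →
        Tendsto (fun i => absψi i (x i)) ↑U (nhds (absψ (q x)))) ∧
      (∀ x, BddFamily x →
        Tendsto (fun i => absψstari i (x i)) ↑U (nhds (absψstar (q x)))) := by
  constructor
  · exact main_tendsto U q q_mul q_norm q_surj ψ absψ ψi absψi hψibdd hrep habsψ habsψi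
  · have hstarbdd : ∃ C : ℝ, ∀ i, ‖ψstari i‖ ≤ C := by
      obtain ⟨C, hC⟩ := hψibdd
      refine ⟨C, fun i => ?_⟩
      refine le_trans (ContinuousLinearMap.opNorm_le_bound _ (norm_nonneg (ψi i)) fun y => ?_)
        (hC i)
      rw [hψstari, ← Complex.star_def, norm_star]
      calc ‖ψi i (star y)‖ ≤ ‖ψi i‖ * ‖star y‖ := (ψi i).le_opNorm _
        _ = ‖ψi i‖ * ‖y‖ := by rw [norm_star]
    have hrepstar : ∀ x, BddFamily x →
        Tendsto (fun i => ψstari i (x i)) ↑U (nhds (ψstar (q x))) := by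
      intro x hx
      obtain ⟨Cx, hCx⟩ := hx
      have hsx : BddFamily (fun i => star (x i)) := ⟨Cx, fun i => by rw [norm_star]; exact hCx i⟩
      have h1 : Tendsto (fun i => ψi i (star (x i))) ↑U (nhds (ψ (star (q x)))) := by
        have := hrep _ hsx
        rwa [q_star x ⟨Cx, hCx⟩] at this
      have h2 : Tendsto (fun i => starRingEnd ℂ (ψi i (star (x i)))) ↑U
          (nhds (starRingEnd ℂ (ψ (star (q x))))) :=
        (RCLike.continuous_conj.tendsto _).comp h1
      simp only [hψstari, hψstar]
      exact h2
    exact main_tendsto U q q_mul q_norm q_surj ψstar absψstar ψstari absψstari hstarbdd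
      hrepstar habsψstar habsψstari
end
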